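/- Let T be a triangulation of a once-punctured disc and i, j boundary vertices with j ≠ i+1. Then the restriction of T to the truncated unpunctured region S_{ij} (cut off by the arc D_{ij}, containing the boundary arc from i clockwise to j) can be extended to a triangulation of an unpunctured disc with a possibly different set of marked points, with the puncture removed. -/

import Mathlib

noncomputable section
open scoped Classical

namespace Frieze

/-- Vertices of the disc with `N` marked points, labelled clockwise. -/
abbrev Vx (N : ℕ) := ZMod N

/-- `Btw a x b` : `x` lies strictly between `a` and `b`, going clockwise. -/
def Btw {N : ℕ} (a x b : Vx N) : Prop :=
  0 < (x - a).val ∧ (x - a).val < (b - a).val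

/-- A valid diagonal (arc) of the unpunctured disc: endpoints distinct and non-adjacent. -/
def IsDiag (N : ℕ) (p : Vx N × Vx N) : Prop :=
  p.2 ≠ p.1 ∧ p.2 ≠ p.1 + 1 ∧ p.1 ≠ p.2 + 1

/-- Two chords cross iff their endpoints strictly interleave in the cyclic order. -/
def DCross {N : ℕ} (p q : Vx N × Vx N) : Prop :=
  (Btw p.1 q.1 p.2 ∧ Btw p.2 q.2 p.1) ∨ (Btw p.1 q.2 p.2 ∧ Btw p.2 q.1 p.1)

/-- A triangulation of the unpunctured disc with `N` marked points:
a maximal collection of pairwise noncrossing diagonals (each recorded once). -/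
structure Triang (N : ℕ) where
  diag : Finset (Vx N × Vx N)
  valid : ∀ p ∈ diag, IsDiag N p
  nodupSym : ∀ p ∈ diag, (p.2, p.1) ∉ diag
  noncross : ∀ p ∈ diag, ∀ q ∈ diag, ¬ DCross p q
  maximal : ∀ p, IsDiag N p → (∀ q ∈ diag, ¬ DCross p q) → p ∈ diag ∨ (p.2, p.1) ∈ diag

/-- The unordered diagonal `{a,b}` belongs to `T`. -/
def MemD {N : ℕ} (T : Triang N) (a b : Vx N) : Prop :=
  (a, b) ∈ T.diag ∨ (b, a) ∈ T.diag

/-- The segment from `a` to `a + d` (going `d` steps clockwise) can be a side of a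
triangle: it is a boundary edge (`d = 1`) or a diagonal of `T`. -/
def USide {N : ℕ} (T : Triang N) (a : Vx N) (d : ℕ) : Prop :=
  d = 1 ∨ MemD T a (a + (d : Vx N))

/-- `(a, p, q)` encodes the triangle with vertices `a`, `a+p`, `a+p+q` (clockwise);
the canonicity condition (`a` carries the smallest label) makes each triangle of
the triangulation be recorded exactly once. -/
def IsUTri {N : ℕ} (T : Triang N) (t : Vx N × ℕ × ℕ) : Prop :=
  1 ≤ t.2.1 ∧ 1 ≤ t.2.2 ∧ t.2.1 + t.2.2 ≤ N - 1 ∧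
  USide T t.1 t.2.1 ∧ USide T (t.1 + (t.2.1 : Vx N)) t.2.2 ∧
  USide T (t.1 + ((t.2.1 + t.2.2 : ℕ) : Vx N)) (N - t.2.1 - t.2.2) ∧
  t.1.val < (t.1 + (t.2.1 : Vx N)).val ∧ t.1.val < (t.1 + ((t.2.1 + t.2.2 : ℕ) : Vx N)).val

/-- Incidence of a vertex with a triangle. -/
def UInc {N : ℕ} (v : Vx N) (t : Vx N × ℕ × ℕ) : Prop :=
  v = t.1 ∨ v = t.1 + (t.2.1 : Vx N) ∨ v = t.1 + ((t.2.1 + t.2.2 : ℕ) : Vx N)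

/-- The number of matchings between the vertex set `I` and those triangles of `T`
lying in `S` : injective allocations, to each vertex of `I`, of an incident triangle. -/
def UMatchIn {N : ℕ} (T : Triang N) (I : Finset (Vx N)) (S : Set (Vx N × ℕ × ℕ)) : ℕ :=
  Set.ncard {f : I → Vx N × ℕ × ℕ | Function.Injective f ∧
    ∀ v : I, IsUTri T (f v) ∧ f v ∈ S ∧ UInc v.1 (f v)}

/-- The number of matchings between the vertex set `I` and the triangulation `T`. -/
def UMatch {N : ℕ} (T : Triang N) (I : Finset (Vx N)) : ℕ :=
  UMatchIn T I Set.univ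

/-- `n_{ij}` : the number of matchings between `T` and all marked points except `i, j`. -/
def nMatch {N : ℕ} [NeZero N] (T : Triang N) (i j : Vx N) : ℕ :=
  UMatch T (Finset.univ \ {i, j})

/-- `i` and `j` are joined by an edge of the triangulated polygon
(a boundary edge or a diagonal of `T`). -/
def Joined {N : ℕ} (T : Triang N) (i j : Vx N) : Prop :=
  j = i + 1 ∨ i = j + 1 ∨ MemD T i j

/-- `x` lies in the closed clockwise arc from `a` to `b`. -/
def InCWArc {N : ℕ} (a x b : Vx N) : Prop := x = a ∨ x = b ∨ Btw a x b

/-- `ℓ` is the Conway–Coxeter labelling of the vertices based at `i` : the vertex `i`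
is labelled `0`, every vertex joined to `i` by an edge (of `T`, or a boundary edge)
is labelled `1`, and in each triangle the vertex on the far side from `i` is labelled
by the sum of the labels of the other two vertices.  The label `ℓ j` is then the
Conway–Coxeter frieze entry `(i,j)`. -/
def IsCCLabel {N : ℕ} (T : Triang N) (i : Vx N) (ℓ : Vx N → ℕ) : Prop :=
  ℓ i = 0 ∧ (∀ j, Joined T i j → ℓ j = 1) ∧
  ∀ a p q, IsUTri T (a, p, q) →
    (InCWArc (a + ((p + q : ℕ) : Vx N)) i a →
      ℓ (a + (p : Vx N)) = ℓ a + ℓ (a + ((p + q : ℕ) : Vx N))) ∧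
    (InCWArc a i (a + (p : Vx N)) →
      ℓ (a + ((p + q : ℕ) : Vx N)) = ℓ a + ℓ (a + (p : Vx N))) ∧
    (InCWArc (a + (p : Vx N)) i (a + ((p + q : ℕ) : Vx N)) →
      ℓ a = ℓ (a + (p : Vx N)) + ℓ (a + ((p + q : ℕ) : Vx N)))

/-- Arcs of the once-punctured disc with boundary vertices `ZMod N` (clockwise) and
puncture `0` : `Sum.inl (i, d)` (with `2 ≤ d ≤ N`) is the arc `D_{i,i+d}` running
from `i` clockwise to `i + d`, leaving the puncture on the other side (`d = N`
gives the loop `D_{ii}` around the puncture); `Sum.inr i` is the central arc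
`D_{i0}` joining `i` to the puncture. -/
abbrev PArc (N : ℕ) := (ZMod N × ℕ) ⊕ ZMod N

def PArcValid (N : ℕ) : PArc N → Prop
  | Sum.inl p => 2 ≤ p.2 ∧ p.2 ≤ N
  | Sum.inr _ => True

/-- Two arcs of the punctured disc cross iff their lifts to the universal cover
(where the arc `D_{i,i+d}` lifts to the intervals `[ĩ, ĩ + d]` and a central arc
to a vertical ray) strictly interleave. -/
def PCross {N : ℕ} : PArc N → PArc N → Prop
  | Sum.inl p, Sum.inl q =>
      (0 < (q.1 - p.1).val ∧ (q.1 - p.1).val < p.2 ∧ p.2 < (q.1 - p.1).val + q.2) ∨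
      (0 < (p.1 - q.1).val ∧ (p.1 - q.1).val < q.2 ∧ q.2 < (p.1 - q.1).val + p.2)
  | Sum.inl p, Sum.inr k => 0 < (k - p.1).val ∧ (k - p.1).val < p.2
  | Sum.inr k, Sum.inl p => 0 < (k - p.1).val ∧ (k - p.1).val < p.2
  | Sum.inr _, Sum.inr _ => False

/-- An (ideal) triangulation of the once-punctured disc with `N` marked points on
the boundary: a maximal collection of pairwise noncrossing arcs. -/
structure PTriang (N : ℕ) where
  arcs : Finset (PArc N)
  valid : ∀ a ∈ arcs, PArcValid N a
  noncross : ∀ a ∈ arcs, ∀ b ∈ arcs, ¬ PCross a b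
  maximal : ∀ a, PArcValid N a → (∀ b ∈ arcs, ¬ PCross a b) → a ∈ arcs

/-- The arc `D_{ij}` (ordered pair, `j ≠ i + 1`); `D_{ii}` is the loop at `i`. -/
def arcD {N : ℕ} (i j : ZMod N) : PArc N :=
  Sum.inl (i, if j = i then N else (j - i).val)

/-- The central arc `D_{i0}`. -/
def centralD {N : ℕ} (i : ZMod N) : PArc N := Sum.inr i

/-- Ideal triangles of the punctured disc: `Sum.inl (a, p, q)` is the triangle
with corners `a`, `a+p`, `a+p+q` and sides of clockwise lengths `p`, `q` and
`p + q` (when `p + q = N` this is the triangle with sides `D_{a,a+p}`, `D_{a+p,a}`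
and the loop `D_{aa}`); `Sum.inr (k, m)` is the triangle incident with the
puncture, with corners `k`, `k+m`, sides the central arcs at `k` and `k+m` and the
side `D_{k,k+m}` (for `m = N` this is the self-folded triangle). -/
abbrev PTri (N : ℕ) := (ZMod N × ℕ × ℕ) ⊕ (ZMod N × ℕ)

/-- The segment from `a` to `a + d`, `d` steps clockwise, may serve as the side of
a triangle: it is a boundary edge (`d = 1`) or an arc of `T`. -/
def PSide {N : ℕ} (T : PTriang N) (a : ZMod N) (d : ℕ) : Prop :=
  d = 1 ∨ Sum.inl (a, d) ∈ T.arcs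

def IsPTri {N : ℕ} (T : PTriang N) : PTri N → Prop
  | Sum.inl t => 1 ≤ t.2.1 ∧ 1 ≤ t.2.2 ∧ t.2.1 + t.2.2 ≤ N ∧
      PSide T t.1 t.2.1 ∧ PSide T (t.1 + (t.2.1 : ZMod N)) t.2.2 ∧ PSide T t.1 (t.2.1 + t.2.2)
  | Sum.inr t => 1 ≤ t.2 ∧ t.2 ≤ N ∧ Sum.inr t.1 ∈ T.arcs ∧
      Sum.inr (t.1 + (t.2 : ZMod N)) ∈ T.arcs ∧ PSide T t.1 t.2

/-- Incidence of a vertex of the punctured disc (`none` is the puncture) with an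
ideal triangle. -/
def PInc {N : ℕ} : Option (ZMod N) → PTri N → Prop
  | some w, Sum.inl t =>
      w = t.1 ∨ w = t.1 + (t.2.1 : ZMod N) ∨ w = t.1 + ((t.2.1 + t.2.2 : ℕ) : ZMod N)
  | none, Sum.inl _ => False
  | some w, Sum.inr t => w = t.1 ∨ w = t.1 + (t.2 : ZMod N)
  | none, Sum.inr _ => True

/-- `m_{ii}` : the number of matchings between all boundary vertices except `i`
together with the puncture, and the triangles of `T`. -/
def mLoop {N : ℕ} (T : PTriang N) (i : ZMod N) : ℕ :=
  Set.ncard {f : {v : Option (ZMod N) // v ≠ some i} → PTri N |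
    Function.Injective f ∧ ∀ v, IsPTri T (f v) ∧ PInc v.1 (f v)}

/-- `d_0` : the number of triangles of `T` incident with the puncture. -/
def dZero {N : ℕ} (T : PTriang N) : ℕ :=
  Set.ncard {t : PTri N | IsPTri T t ∧ PInc none t}

/-- Lifts of ideal triangles to the universal cover (`ℤ` lifts the boundary
vertices); distinct lifts of a triangle meeting a truncated disc `S_{ij}` are
exactly the connected regions into which the triangle is split there. -/
abbrev LTri := (ℤ × ℕ × ℕ) ⊕ (ℤ × ℕ)

def LProj {N : ℕ} : LTri → PTri N
  | Sum.inl t => Sum.inl ((t.1 : ZMod N), t.2.1, t.2.2)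
  | Sum.inr t => Sum.inr ((t.1 : ZMod N), t.2)

/-- The corners of a lifted triangle. -/
def LCorner : LTri → ℤ → Prop
  | Sum.inl t, v => v = t.1 ∨ v = t.1 + t.2.1 ∨ v = t.1 + t.2.1 + t.2.2
  | Sum.inr t, v => v = t.1 ∨ v = t.1 + t.2

/-- The lifted triangle lies (horizontally) within `[lo, hi]`. -/
def LIn (lo hi : ℤ) : LTri → Prop
  | Sum.inl t => lo ≤ t.1 ∧ t.1 + t.2.1 + t.2.2 ≤ hi
  | Sum.inr t => lo ≤ t.1 ∧ t.1 + t.2 ≤ hi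

/-- The clockwise span of the arc `D_{ij}` (`N` for the loop `D_{ii}`). -/
def spanD {N : ℕ} (i j : ZMod N) : ℕ := if j = i then N else (j - i).val

/-- The lifts of the boundary vertices lying strictly between `i` and `j`
(clockwise), i.e. the vertices of the truncated disc `S_{ij}` other than `i, j`. -/
def interiorIcc {N : ℕ} (i j : ZMod N) : Finset ℤ :=
  Finset.Icc ((i.val : ℤ) + 1) ((i.val : ℤ) + (spanD i j : ℤ) - 1)

/-- The number of matchings between a set `I` of lifted boundary vertices of a
truncated disc and the triangles and regions of the restricted triangulation:
injective allocations, to each vertex, of a lift of a triangle of `T` having it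
as a corner. -/
def mArcOn {N : ℕ} (T : PTriang N) (I : Finset ℤ) : ℕ :=
  Set.ncard {f : I → LTri | Function.Injective f ∧
    ∀ v : I, IsPTri T (LProj (f v)) ∧ LCorner (f v) v.1}

/-- `m_{ij}` (for `j ≠ i, i+1`) : the number of matchings between the vertices
strictly between `i` and `j` clockwise and the restriction of `T` to `S_{ij}`. -/
def mArc {N : ℕ} (T : PTriang N) (i j : ZMod N) : ℕ :=
  mArcOn T (interiorIcc i j)

/-- The matching number attached to the arc `D_{ij}` : `m_{ii}` is the matching
number of the loop `D_{ii}`, and by convention `m_{i,i+1} = 1`. -/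
def mNum {N : ℕ} (T : PTriang N) (i j : ZMod N) : ℕ :=
  if j = i then mLoop T i else if j = i + 1 then 1 else mArc T i j

/-- The lift of the nearest weakly-anticlockwise neighbour `k` of `i` with
`D_{k0} ∈ T` (the anticlockwise end of the cut-open disc `P(i)`). -/
def kLift {N : ℕ} (T : PTriang N) (i : ZMod N) : ℤ :=
  WithBot.unbotD 0 ((Finset.Icc ((i.val : ℤ) - N + 1) (i.val : ℤ)).filter
    (fun t : ℤ => (Sum.inr ((t : ZMod N)) : PArc N) ∈ T.arcs)).max

/-- The lift of the nearest strictly-clockwise neighbour `j` of `i` with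
`D_{j0} ∈ T` (the clockwise end of the cut-open disc `P(i)`). -/
def jLift {N : ℕ} (T : PTriang N) (i : ZMod N) : ℤ :=
  WithTop.untopD 0 ((Finset.Icc ((i.val : ℤ) + 1) ((i.val : ℤ) + N)).filter
    (fun t : ℤ => (Sum.inr ((t : ZMod N)) : PArc N) ∈ T.arcs)).min

/-- `m_{i0}` : the number of matchings, in the unpunctured disc `P(i)` obtained by
cutting `S` open along the central arcs nearest to `i`, between all boundary
vertices of `P(i)` other than `i` and the puncture, and the triangles of `T`
lying in `P(i)`. -/
def mCentral {N : ℕ} (T : PTriang N) (i : ZMod N) : ℕ :=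
  Set.ncard {f : ((Finset.Icc (kLift T i) (jLift T i)).erase (i.val : ℤ)) → LTri |
    Function.Injective f ∧ ∀ v, IsPTri T (LProj (f v)) ∧
      LIn (kLift T i) (jLift T i) (f v) ∧ LCorner (f v) v.1}



/-! ### Auxiliary construction: cutting the punctured disc open along lifted central arcs -/

section Construction

variable (N : ℕ) (T : PTriang N) (c : ℤ)

/-- Number of marked points of the auxiliary polygon. -/
abbrev MB : ℕ := 7 * N + 2

instance : NeZero (MB N) := ⟨by show 7 * N + 2 ≠ 0; omega⟩

/-- Left end of the strip (a lift of a central arc of `T`). -/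
def Lo : ℤ := c - 3 * N

/-- Right end of the strip (a lift of a central arc of `T`). -/
def Hi : ℤ := c + 4 * N

/-- The vertex map from lifts to the auxiliary polygon. -/
def psi (t : ℤ) : ZMod (MB N) := ((t - Lo N c : ℤ) : ZMod (MB N))

/-- The apex vertex of the auxiliary polygon (replacing the puncture). -/
def ztop : ZMod (MB N) := ((7 * (N : ℤ) + 1 : ℤ) : ZMod (MB N))

/-- The diagonals of the auxiliary triangulation. -/
def PD (x y : ZMod (MB N)) : Prop :=
  (∃ (u : ℤ) (e : ℕ), Lo N c ≤ u ∧ u + e ≤ Hi N c ∧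
      Sum.inl (((u : ZMod N)), e) ∈ T.arcs ∧ x = psi N c u ∧ y = psi N c (u + e)) ∨
  (∃ t : ℤ, Lo N c < t ∧ t < Hi N c ∧ Sum.inr ((t : ZMod N)) ∈ T.arcs ∧
      x = psi N c t ∧ y = ztop N)

def diagC : Finset (ZMod (MB N) × ZMod (MB N)) :=
  Finset.univ.filter fun p => PD N T c p.1 p.2

lemma MB_cast : ((MB N : ℕ) : ℤ) = 7 * (N : ℤ) + 2 := by
  show ((7 * N + 2 : ℕ) : ℤ) = _ ; push_cast; ring

lemma Hi_sub_Lo : Hi N c - Lo N c = 7 * (N : ℤ) := by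
  show c + 4 * (N:ℤ) - (c - 3 * N) = 7 * N; ring

lemma psi_val_mod (t : ℤ) :
    (((psi N c t).val : ℕ) : ℤ) = (t - Lo N c) % (7 * (N : ℤ) + 2) := by
  rw [psi, ZMod.val_intCast, MB_cast]

lemma psi_val (t : ℤ) (h1 : Lo N c ≤ t) (h2 : t ≤ Hi N c + 1) :
    (((psi N c t).val : ℕ) : ℤ) = t - Lo N c := by
  have h := Hi_sub_Lo N c
  rw [psi_val_mod, Int.emod_eq_of_lt (by omega) (by omega)]

lemma psi_inj {s t : ℤ} (hs1 : Lo N c ≤ s) (hs2 : s ≤ Hi N c + 1)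
    (ht1 : Lo N c ≤ t) (ht2 : t ≤ Hi N c + 1) (h : psi N c s = psi N c t) : s = t := by
  have h1 := psi_val N c s hs1 hs2
  have h2 := psi_val N c t ht1 ht2
  rw [h] at h1; omega

lemma psi_add (t : ℤ) (e : ℕ) : psi N c (t + e) = psi N c t + (e : ZMod (MB N)) := by
  unfold psi; push_cast; ring

lemma psi_one (t : ℤ) : psi N c (t + 1) = psi N c t + 1 := by
  unfold psi; push_cast; ring

lemma psi_period (t : ℤ) : psi N c (t + ((MB N : ℕ) : ℤ)) = psi N c t := by
  rw [psi_add, ZMod.natCast_self, add_zero]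

lemma ztop_eq : ztop N = psi N c (Hi N c + 1) := by
  unfold ztop psi; congr 1
  show (7:ℤ) * N + 1 = (c + 4 * N) + 1 - (c - 3 * N); ring

lemma val_psi_sub (s t : ℤ) (hs : Lo N c ≤ s) (hs' : s ≤ Hi N c + 1)
    (ht : Lo N c ≤ t) (ht' : t ≤ Hi N c + 1) :
    (((psi N c s - psi N c t).val : ℕ) : ℤ) =
      if t ≤ s then s - t else s - t + (7 * (N : ℤ) + 2) := by
  have hd : psi N c s - psi N c t = ((s - t : ℤ) : ZMod (MB N)) := by
    unfold psi; push_cast; ring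
  have h := Hi_sub_Lo N c
  rw [hd, ZMod.val_intCast, MB_cast]
  split_ifs with hle
  · exact Int.emod_eq_of_lt (by omega) (by omega)
  · have h2 : (s - t) % (7 * (N:ℤ) + 2) = (s - t + (7 * (N:ℤ) + 2)) % (7 * (N:ℤ) + 2) := by
      conv_lhs => rw [show s - t = (s - t + (7 * (N:ℤ) + 2)) + (7 * (N:ℤ) + 2) * (-1) by ring]
      rw [Int.add_mul_emod_self_left]
    rw [h2, Int.emod_eq_of_lt (by omega) (by omega)]

lemma exists_rep (x : ZMod (MB N)) : ∃ s, Lo N c ≤ s ∧ s ≤ Hi N c + 1 ∧ x = psi N c s := by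
  have hlt : x.val < MB N := ZMod.val_lt x
  have hMB := MB_cast N
  have hHL := Hi_sub_Lo N c
  refine ⟨Lo N c + x.val, by omega, by omega, ?_⟩
  unfold psi
  rw [show Lo N c + (x.val : ℤ) - Lo N c = (x.val : ℤ) by ring]
  push_cast
  rw [ZMod.natCast_val, ZMod.cast_id]

/- mod `N` lemmas -/

lemma valN_sub (hN : 3 ≤ N) (a b : ℤ) (h0 : 0 < a - b) (h1 : a - b < N) :
    ((((a : ZMod N) - (b : ZMod N)).val : ℕ) : ℤ) = a - b := by
  haveI : NeZero N := ⟨by omega⟩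
  have hd : (a : ZMod N) - (b : ZMod N) = ((a - b : ℤ) : ZMod N) := by push_cast; ring
  rw [hd, ZMod.val_intCast, Int.emod_eq_of_lt (by omega) (by omega)]

lemma lift_of_val (hN : 3 ≤ N) (u : ℤ) (x : ZMod N) :
    ((u + (((x - (u : ZMod N)).val : ℕ) : ℤ) : ℤ) : ZMod N) = x := by
  haveI : NeZero N := ⟨by omega⟩
  push_cast
  rw [ZMod.natCast_val, ZMod.cast_id]
  ring

lemma lift_of_val' (hN : 3 ≤ N) (u : ℤ) (x : ZMod N) :
    ((u - ((((u : ZMod N) - x).val : ℕ) : ℤ) : ℤ) : ZMod N) = x := by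
  haveI : NeZero N := ⟨by omega⟩
  push_cast
  rw [ZMod.natCast_val, ZMod.cast_id]
  ring

lemma cast_eq_of_dvd (hN : 3 ≤ N) (t0 : ℤ) (h : (N : ℤ) ∣ (t0 - c)) :
    ((t0 : ZMod N)) = ((c : ZMod N)) := by
  haveI : NeZero N := ⟨by omega⟩
  have h2 := (ZMod.intCast_zmod_eq_zero_iff_dvd (t0 - c) N).mpr h
  push_cast at h2
  exact sub_eq_zero.mp h2

lemma Lo_central (hN : 3 ≤ N) (hcT : Sum.inr ((c : ZMod N)) ∈ T.arcs) :
    Sum.inr (((Lo N c : ℤ) : ZMod N)) ∈ T.arcs := by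
  have : ((Lo N c : ℤ) : ZMod N) = ((c : ZMod N)) :=
    cast_eq_of_dvd N c hN _ ⟨-3, by show c - 3*(N:ℤ) - c = _; ring⟩
  rwa [this]

lemma Hi_central (hN : 3 ≤ N) (hcT : Sum.inr ((c : ZMod N)) ∈ T.arcs) :
    Sum.inr (((Hi N c : ℤ) : ZMod N)) ∈ T.arcs := by
  have : ((Hi N c : ℤ) : ZMod N) = ((c : ZMod N)) :=
    cast_eq_of_dvd N c hN _ ⟨4, by show c + 4*(N:ℤ) - c = _; ring⟩
  rwa [this]

/- crossing transfer lemmas -/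

lemma PCross_rl_intro (k a : ZMod N) (d : ℕ) (h1 : 0 < (k - a).val) (h2 : (k - a).val < d) :
    PCross (Sum.inr k) (Sum.inl (a, d)) := ⟨h1, h2⟩

lemma PCross_ll_intro (a b : ZMod N) (d e : ℕ) (h1 : 0 < (b - a).val)
    (h2 : (b - a).val < d) (h3 : d < (b - a).val + e) :
    PCross (Sum.inl (a, d)) (Sum.inl (b, e)) := Or.inl ⟨h1, h2, h3⟩

lemma cross_lr (hN : 3 ≤ N) (u : ℤ) (e : ℕ) (t0 : ℤ)
    (ha : Sum.inl (((u : ZMod N)), e) ∈ T.arcs) (hc : Sum.inr ((t0 : ZMod N)) ∈ T.arcs)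
    (h1 : u < t0) (h2 : t0 < u + e) : False := by
  have hv : 2 ≤ e ∧ e ≤ N := T.valid _ ha
  have hval := valN_sub N hN t0 u (by omega) (by omega)
  exact T.noncross _ hc _ ha (PCross_rl_intro N _ _ _ (by omega) (by omega))

lemma cross_ll (hN : 3 ≤ N) (u u' : ℤ) (e e' : ℕ)
    (h1 : Sum.inl (((u : ZMod N)), e) ∈ T.arcs) (h2 : Sum.inl (((u' : ZMod N)), e') ∈ T.arcs)
    (ha : u < u') (hb : u' < u + e) (hc : u + e < u' + e') : False := by
  have hv : 2 ≤ e ∧ e ≤ N := T.valid _ h1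
  have hval := valN_sub N hN u' u (by omega) (by omega)
  exact T.noncross _ h1 _ h2 (PCross_ll_intro N _ _ _ _ (by omega) (by omega) (by omega))

lemma lift_cross_lr (hN : 3 ≤ N) (u : ℤ) (e : ℕ) (k : ZMod N)
    (h : PCross (Sum.inl (((u : ZMod N)), e)) (Sum.inr k)) :
    ∃ t0 : ℤ, (t0 : ZMod N) = k ∧ u < t0 ∧ t0 < u + e := by
  obtain ⟨h1, h2⟩ : 0 < (k - (u : ZMod N)).val ∧ (k - (u : ZMod N)).val < e := h
  exact ⟨u + ((k - (u : ZMod N)).val : ℤ), lift_of_val N hN u k, by omega, by omega⟩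

lemma lift_cross_ll (hN : 3 ≤ N) (u : ℤ) (e : ℕ) (a : ZMod N) (d : ℕ)
    (h : PCross (Sum.inl (((u : ZMod N)), e)) (Sum.inl (a, d))) :
    ∃ a' : ℤ, (a' : ZMod N) = a ∧
      ((u < a' ∧ a' < u + e ∧ u + e < a' + d) ∨ (a' < u ∧ u < a' + d ∧ a' + d < u + e)) := by
  have h' : (0 < (a - (u : ZMod N)).val ∧ (a - (u : ZMod N)).val < e ∧
        e < (a - (u : ZMod N)).val + d) ∨
      (0 < ((u : ZMod N) - a).val ∧ ((u : ZMod N) - a).val < d ∧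
        d < ((u : ZMod N) - a).val + e) := h
  rcases h' with ⟨h1, h2, h3⟩ | ⟨h1, h2, h3⟩
  · exact ⟨u + ((a - (u : ZMod N)).val : ℤ), lift_of_val N hN u a,
      Or.inl ⟨by omega, by omega, by omega⟩⟩
  · exact ⟨u - (((u : ZMod N) - a).val : ℤ), lift_of_val' N hN u a,
      Or.inr ⟨by omega, by omega, by omega⟩⟩

lemma arc_in_strip (hN : 3 ≤ N) (hcT : Sum.inr ((c : ZMod N)) ∈ T.arcs) (u : ℤ) (e : ℕ)
    (ha : Sum.inl (((u : ZMod N)), e) ∈ T.arcs) (h1 : Lo N c < u + e) (h2 : u < Hi N c) :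
    Lo N c ≤ u ∧ u + e ≤ Hi N c := by
  constructor
  · by_contra h; push_neg at h
    exact cross_lr N T hN u e (Lo N c) ha (Lo_central N T c hN hcT) (by omega) h1
  · by_contra h; push_neg at h
    exact cross_lr N T hN u e (Hi N c) ha (Hi_central N T c hN hcT) h2 (by omega)

lemma exists_central (hN : 3 ≤ N) : ∃ t : ℤ, 0 ≤ t ∧ t < N ∧ Sum.inr ((t : ZMod N)) ∈ T.arcs := by
  haveI : NeZero N := ⟨by omega⟩
  by_cases hc : ∃ k : ZMod N, Sum.inr k ∈ T.arcs
  · obtain ⟨k, hk⟩ := hc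
    refine ⟨(k.val : ℤ), Int.natCast_nonneg _, by exact_mod_cast ZMod.val_lt k, ?_⟩
    have : ((k.val : ℤ) : ZMod N) = k := by push_cast; rw [ZMod.natCast_val, ZMod.cast_id]
    rwa [this]
  · exfalso
    push_neg at hc
    have step1 : ∀ k : ZMod N, ∃ p : ZMod N × ℕ,
        Sum.inl p ∈ T.arcs ∧ PCross (Sum.inr k) (Sum.inl p) := by
      intro k
      by_contra hno; push_neg at hno
      refine hc k (T.maximal _ trivial ?_)
      intro b hb
      match b with
      | Sum.inr k' => exact fun h => h
      | Sum.inl p => exact hno p hb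
    obtain ⟨p0, hp0, _⟩ := step1 0
    obtain ⟨b0, hb0, hmax⟩ :=
      T.arcs.exists_max_image (fun b => Sum.elim (fun p : ZMod N × ℕ => p.2) (fun _ => 0) b)
        ⟨_, hp0⟩
    rcases b0 with p1 | k1
    · obtain ⟨p2, hp2, hcr⟩ := step1 p1.1
      obtain ⟨h1, h2⟩ := hcr
      have hle : p2.2 ≤ p1.2 := by simpa using hmax _ hp2
      exact T.noncross _ hp2 _ hb0 (PCross_ll_intro N _ _ _ _ h1 h2 (by omega))
    · exact hc k1 hb0


/- DCross in terms of integer interleaving -/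

lemma interleave_of_DCross (a b a' b' : ℤ)
    (ha : Lo N c ≤ a) (hb : b ≤ Hi N c + 1) (hab : a < b)
    (ha' : Lo N c ≤ a') (hb' : b' ≤ Hi N c + 1) (hab' : a' < b')
    (h : DCross (psi N c a, psi N c b) (psi N c a', psi N c b')) :
    (a < a' ∧ a' < b ∧ b < b') ∨ (a' < a ∧ a < b' ∧ b' < b) := by
  have hL := Hi_sub_Lo N c
  simp only [DCross, Btw] at h
  zify at h
  rw [val_psi_sub N c a' a (by omega) (by omega) (by omega) (by omega),
    val_psi_sub N c b a (by omega) (by omega) (by omega) (by omega),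
    val_psi_sub N c b' b (by omega) (by omega) (by omega) (by omega),
    val_psi_sub N c a b (by omega) (by omega) (by omega) (by omega),
    val_psi_sub N c b' a (by omega) (by omega) (by omega) (by omega),
    val_psi_sub N c a' b (by omega) (by omega) (by omega) (by omega)] at h
  split_ifs at h <;> omega

lemma DCross_of_interleave (a b a' b' : ℤ)
    (ha : Lo N c ≤ a) (hb : b ≤ Hi N c + 1) (hab : a < b)
    (ha' : Lo N c ≤ a') (hb' : b' ≤ Hi N c + 1) (hab' : a' < b')
    (h : (a < a' ∧ a' < b ∧ b < b') ∨ (a' < a ∧ a < b' ∧ b' < b)) :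
    DCross (psi N c a, psi N c b) (psi N c a', psi N c b') := by
  have hL := Hi_sub_Lo N c
  simp only [DCross, Btw]
  zify
  rw [val_psi_sub N c a' a (by omega) (by omega) (by omega) (by omega),
    val_psi_sub N c b a (by omega) (by omega) (by omega) (by omega),
    val_psi_sub N c b' b (by omega) (by omega) (by omega) (by omega),
    val_psi_sub N c a b (by omega) (by omega) (by omega) (by omega),
    val_psi_sub N c b' a (by omega) (by omega) (by omega) (by omega),
    val_psi_sub N c a' b (by omega) (by omega) (by omega) (by omega)]
  split_ifs <;> omega

lemma dcross_swap {M : ℕ} (x y : ZMod M) (q : ZMod M × ZMod M) :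
    DCross (x, y) q ↔ DCross (y, x) q := by
  constructor <;> rintro (⟨h1, h2⟩ | ⟨h1, h2⟩)
  · exact Or.inr ⟨h2, h1⟩
  · exact Or.inl ⟨h2, h1⟩
  · exact Or.inr ⟨h2, h1⟩
  · exact Or.inl ⟨h2, h1⟩

/- membership lemmas for `diagC` -/

lemma mem_diagC {p : ZMod (MB N) × ZMod (MB N)} :
    p ∈ diagC N T c ↔ PD N T c p.1 p.2 := by
  simp [diagC]

lemma bot_mem (u : ℤ) (e : ℕ) (h1 : Lo N c ≤ u) (h2 : u + e ≤ Hi N c)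
    (h3 : Sum.inl (((u : ZMod N)), e) ∈ T.arcs) :
    (psi N c u, psi N c (u + e)) ∈ diagC N T c :=
  (mem_diagC N T c).mpr (Or.inl ⟨u, e, h1, h2, h3, rfl, rfl⟩)

lemma cen_mem (t0 : ℤ) (h1 : Lo N c < t0) (h2 : t0 < Hi N c)
    (h3 : Sum.inr ((t0 : ZMod N)) ∈ T.arcs) :
    (psi N c t0, ztop N) ∈ diagC N T c :=
  (mem_diagC N T c).mpr (Or.inr ⟨t0, h1, h2, h3, rfl, rfl⟩)

lemma diag_repr {x y : ZMod (MB N)} (h : PD N T c x y) :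
    ∃ a b : ℤ, Lo N c ≤ a ∧ a < b ∧ b ≤ Hi N c + 1 ∧ x = psi N c a ∧ y = psi N c b ∧
      ((b ≤ Hi N c ∧ 2 ≤ b - a ∧ b - a ≤ N ∧
          Sum.inl (((a : ZMod N)), (b - a).toNat) ∈ T.arcs) ∨
        (b = Hi N c + 1 ∧ Lo N c < a ∧ a < Hi N c ∧ Sum.inr ((a : ZMod N)) ∈ T.arcs)) := by
  rcases h with ⟨u, e, h1, h2, h3, rfl, rfl⟩ | ⟨t0, h1, h2, h3, rfl, rfl⟩
  · have hv : 2 ≤ e ∧ e ≤ N := T.valid _ h3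
    refine ⟨u, u + e, h1, by omega, by omega, rfl, rfl,
      Or.inl ⟨h2, by omega, by omega, ?_⟩⟩
    rwa [show u + (e : ℤ) - u = (e : ℤ) by ring, Int.toNat_natCast]
  · exact ⟨t0, Hi N c + 1, by omega, by omega, le_refl _, rfl, ztop_eq N c,
      Or.inr ⟨rfl, h1, h2, h3⟩⟩

/- the axioms of `Triang` for `diagC` -/

lemma Tp_valid (hN : 3 ≤ N) : ∀ p ∈ diagC N T c, IsDiag (MB N) p := by
  have hL := Hi_sub_Lo N c
  rintro ⟨x, y⟩ hp
  obtain ⟨a, b, h1, h2, h3, rfl, rfl, hk⟩ := diag_repr N T c ((mem_diagC N T c).mp hp)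
  have hk' : 2 ≤ b - a := by rcases hk with ⟨_, h, _⟩ | ⟨h, ha, _⟩ <;> omega
  refine ⟨?_, ?_, ?_⟩
  · intro h
    have := psi_inj N c (by omega) (by omega) (by omega) (by omega) h
    omega
  · intro h
    rw [← psi_one] at h
    by_cases hrange : a + 1 ≤ Hi N c + 1
    · have := psi_inj N c (by omega) (by omega) (by omega) hrange h
      omega
    · -- a = Hi + 1, impossible since a < b ≤ Hi + 1
      omega
  · intro h
    rw [← psi_one] at h
    by_cases hrange : b + 1 ≤ Hi N c + 1
    · have := psi_inj N c (by omega) (by omega) (by omega) hrange h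
      omega
    · -- b = Hi + 1 : then psi (b+1) = psi Lo
      have hb : b = Hi N c + 1 := by omega
      have hper : psi N c (b + 1) = psi N c (Lo N c) := by
        rw [show b + 1 = Lo N c + ((MB N : ℕ) : ℤ) by
            have := MB_cast N; omega]
        exact psi_period N c (Lo N c)
      rw [hper] at h
      have := psi_inj N c (by omega) (by omega) (by omega) (by omega) h
      -- a = Lo, b = Hi+1 : but kind forces either b ≤ Hi or Lo < a
      rcases hk with ⟨h', _⟩ | ⟨_, h', _⟩ <;> omega

lemma Tp_nodup (hN : 3 ≤ N) : ∀ p ∈ diagC N T c, (p.2, p.1) ∉ diagC N T c := by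
  have hL := Hi_sub_Lo N c
  rintro ⟨x, y⟩ hp hq
  obtain ⟨a, b, h1, h2, h3, rfl, rfl, hk⟩ := diag_repr N T c ((mem_diagC N T c).mp hp)
  obtain ⟨a', b', h1', h2', h3', hx', hy', hk'⟩ := diag_repr N T c ((mem_diagC N T c).mp hq)
  -- hx' : psi b = psi a', hy' : psi a = psi b'
  have e1 := psi_inj N c (by omega) (by omega) (by omega) (by omega) hx'
  have e2 := psi_inj N c (by omega) (by omega) (by omega) (by omega) hy'
  omega

lemma Tp_noncross (hN : 3 ≤ N) :
    ∀ p ∈ diagC N T c, ∀ q ∈ diagC N T c, ¬ DCross p q := by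
  have hL := Hi_sub_Lo N c
  rintro ⟨x, y⟩ hp ⟨x', y'⟩ hq hd
  obtain ⟨a, b, h1, h2, h3, rfl, rfl, hk⟩ := diag_repr N T c ((mem_diagC N T c).mp hp)
  obtain ⟨a', b', h1', h2', h3', rfl, rfl, hk'⟩ := diag_repr N T c ((mem_diagC N T c).mp hq)
  have hpat := interleave_of_DCross N c a b a' b' (by omega) (by omega) (by omega)
    (by omega) (by omega) (by omega) hd
  have t1 : ∀ z w : ℤ, z ≤ w → ((w - z).toNat : ℤ) = w - z := fun z w h =>
    Int.toNat_of_nonneg (by omega)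
  rcases hk with ⟨hb1, hb2, hb3, harc⟩ | ⟨hb1, hb2, hb3, hcen⟩ <;>
    rcases hk' with ⟨hb1', hb2', hb3', harc'⟩ | ⟨hb1', hb2', hb3', hcen'⟩
  · have e1 := t1 a b (by omega); have e2 := t1 a' b' (by omega)
    rcases hpat with ⟨g1, g2, g3⟩ | ⟨g1, g2, g3⟩
    · exact cross_ll N T hN a a' _ _ harc harc' g1 (by omega) (by omega)
    · exact cross_ll N T hN a' a _ _ harc' harc g1 (by omega) (by omega)
  · have e1 := t1 a b (by omega)
    rcases hpat with ⟨g1, g2, g3⟩ | ⟨g1, g2, g3⟩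
    · exact cross_lr N T hN a _ a' harc hcen' g1 (by omega)
    · omega
  · have e2 := t1 a' b' (by omega)
    rcases hpat with ⟨g1, g2, g3⟩ | ⟨g1, g2, g3⟩
    · omega
    · exact cross_lr N T hN a' _ a harc' hcen g1 (by omega)
  · omega

lemma lift_cross_rl (hN : 3 ≤ N) (s : ℤ) (a : ZMod N) (d : ℕ)
    (h : PCross (Sum.inr ((s : ZMod N))) (Sum.inl (a, d))) :
    ∃ a' : ℤ, (a' : ZMod N) = a ∧ a' < s ∧ s < a' + d := by
  have h' : 0 < ((s : ZMod N) - a).val ∧ ((s : ZMod N) - a).val < d := h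
  exact ⟨s - (((s : ZMod N) - a).val : ℤ), lift_of_val' N hN s a, by omega, by omega⟩

lemma central_lift (hN : 3 ≤ N) (hcT : Sum.inr ((c : ZMod N)) ∈ T.arcs)
    (s t : ℤ) (h : s + (N : ℤ) < t) : ∃ t0 : ℤ, s < t0 ∧ t0 < t ∧
      Sum.inr ((t0 : ZMod N)) ∈ T.arcs := by
  haveI : NeZero N := ⟨by omega⟩
  have hN0 : (0:ℤ) < (N:ℤ) := by omega
  refine ⟨s + 1 + (c - s - 1) % N, ?_, ?_, ?_⟩
  · have := Int.emod_nonneg (c - s - 1) (by omega : (N:ℤ) ≠ 0); omega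
  · have := Int.emod_lt_of_pos (c - s - 1) hN0; omega
  · have : ((s + 1 + (c - s - 1) % N : ℤ) : ZMod N) = ((c : ZMod N)) := by
      refine cast_eq_of_dvd N c hN _ ⟨-((c - s - 1) / N), ?_⟩
      rw [Int.emod_def]; ring
    rwa [this]

lemma build (hN : 3 ≤ N) (hcT : Sum.inr ((c : ZMod N)) ∈ T.arcs)
    (s t : ℤ) (hs : Lo N c ≤ s) (ht : t ≤ Hi N c + 1)
    (h1 : s + 2 ≤ t) (h2 : t ≤ s + 7 * N)
    (hnc : ∀ q ∈ diagC N T c, ¬ DCross (psi N c s, psi N c t) q) :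
    PD N T c (psi N c s) (psi N c t) := by
  have hL := Hi_sub_Lo N c
  haveI : NeZero N := ⟨by omega⟩
  by_cases htH : t = Hi N c + 1
  · -- central case
    have hs1 : Lo N c < s := by omega
    have hs2 : s < Hi N c := by omega
    have harc : Sum.inr ((s : ZMod N)) ∈ T.arcs := by
      refine T.maximal _ trivial ?_
      intro b hb
      match b with
      | Sum.inr k => exact fun h => h
      | Sum.inl (a, d) =>
        intro hcr
        obtain ⟨a', hcast, g1, g2⟩ := lift_cross_rl N hN s a d hcr
        have hb' : Sum.inl (((a' : ZMod N)), d) ∈ T.arcs := hcast ▸ hb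
        have hv : 2 ≤ d ∧ d ≤ N := T.valid _ hb' 
        have hstrip := arc_in_strip N T c hN hcT a' d hb' (by omega) (by omega)
        refine hnc _ (bot_mem N T c a' d hstrip.1 hstrip.2 hb') ?_
        exact DCross_of_interleave N c s t a' (a' + d) (by omega) (by omega) (by omega)
          (by omega) (by omega) (by omega) (Or.inr ⟨g1, g2, by omega⟩)
    exact Or.inr ⟨s, hs1, hs2, harc, rfl, by rw [htH, ← ztop_eq]⟩
  · -- bottom case
    have htH' : t ≤ Hi N c := by omega
    have hnocen : ∀ t0, s < t0 → t0 < t → Sum.inr ((t0 : ZMod N)) ∈ T.arcs → False := by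
      intro t0 g1 g2 hc0
      refine hnc _ (cen_mem N T c t0 (by omega) (by omega) hc0) ?_
      rw [ztop_eq N c]
      exact DCross_of_interleave N c s t t0 (Hi N c + 1) (by omega) (by omega) (by omega)
        (by omega) (by omega) (by omega) (Or.inl ⟨g1, g2, by omega⟩)
    have heN : t - s ≤ (N : ℤ) := by
      by_contra hcon; push_neg at hcon
      obtain ⟨t0, g1, g2, g3⟩ := central_lift N T c hN hcT s t (by omega)
      exact hnocen t0 g1 g2 g3
    set e : ℕ := (t - s).toNat with he
    have heZ : (e : ℤ) = t - s := Int.toNat_of_nonneg (by omega)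
    have harc : Sum.inl (((s : ZMod N)), e) ∈ T.arcs := by
      refine T.maximal _ (show 2 ≤ e ∧ e ≤ N by omega) ?_
      intro b hb
      match b with
      | Sum.inr k =>
        intro hcr
        obtain ⟨t0, hcast, g1, g2⟩ := lift_cross_lr N hN s e k hcr
        exact hnocen t0 g1 (by omega) (hcast ▸ hb)
      | Sum.inl (a, d) =>
        intro hcr
        obtain ⟨a', hcast, hpat⟩ := lift_cross_ll N hN s e a d hcr
        have hb' : Sum.inl (((a' : ZMod N)), d) ∈ T.arcs := hcast ▸ hb
        have hv : 2 ≤ d ∧ d ≤ N := T.valid _ hb'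
        rcases hpat with ⟨g1, g2, g3⟩ | ⟨g1, g2, g3⟩
        · have hstrip := arc_in_strip N T c hN hcT a' d hb' (by omega) (by omega)
          refine hnc _ (bot_mem N T c a' d hstrip.1 hstrip.2 hb') ?_
          exact DCross_of_interleave N c s t a' (a' + d) (by omega) (by omega) (by omega)
            (by omega) (by omega) (by omega) (Or.inl ⟨g1, by omega, by omega⟩)
        · have hstrip := arc_in_strip N T c hN hcT a' d hb' (by omega) (by omega)
          refine hnc _ (bot_mem N T c a' d hstrip.1 hstrip.2 hb') ?_
          exact DCross_of_interleave N c s t a' (a' + d) (by omega) (by omega) (by omega)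
            (by omega) (by omega) (by omega) (Or.inr ⟨g1, by omega, by omega⟩)
    exact Or.inl ⟨s, e, hs, by omega, harc, rfl, by rw [show s + (e : ℤ) = t by omega]⟩

lemma Tp_maximal (hN : 3 ≤ N) (hcT : Sum.inr ((c : ZMod N)) ∈ T.arcs) :
    ∀ p, IsDiag (MB N) p → (∀ q ∈ diagC N T c, ¬ DCross p q) →
      p ∈ diagC N T c ∨ (p.2, p.1) ∈ diagC N T c := by
  have hL := Hi_sub_Lo N c
  have hMB := MB_cast N
  rintro ⟨x, y⟩ ⟨hd1, hd2, hd3⟩ hnc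
  obtain ⟨s, hs1, hs2, rfl⟩ := exists_rep N c x
  obtain ⟨t, ht1, ht2, rfl⟩ := exists_rep N c y
  have hst : s ≠ t := fun h => hd1 (by rw [h])
  have hst1 : t ≠ s + 1 := by
    intro h; exact hd2 (by rw [h, psi_one])
  have hst2 : s ≠ t + 1 := by
    intro h; exact hd3 (by rw [h, psi_one])
  have hwrap1 : ¬ (s = Lo N c ∧ t = Hi N c + 1) := by
    rintro ⟨rfl, rfl⟩
    refine hd3 ?_
    rw [← psi_one, show Hi N c + 1 + 1 = Lo N c + ((MB N : ℕ) : ℤ) by omega, psi_period]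
  have hwrap2 : ¬ (t = Lo N c ∧ s = Hi N c + 1) := by
    rintro ⟨rfl, rfl⟩
    refine hd2 ?_
    rw [← psi_one, show Hi N c + 1 + 1 = Lo N c + ((MB N : ℕ) : ℤ) by omega, psi_period]
  rcases lt_or_gt_of_ne hst with hlt | hgt
  · exact Or.inl ((mem_diagC N T c).mpr
      (build N T c hN hcT s t hs1 ht2 (by omega) (by omega) hnc))
  · refine Or.inr ((mem_diagC N T c).mpr
      (build N T c hN hcT t s ht1 hs2 (by omega) (by omega) ?_))
    intro q hq hcr
    exact hnc q hq ((dcross_swap _ _ q).mpr hcr)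

/-- The auxiliary polygon triangulation. -/
def Tp (hN : 3 ≤ N) (hcT : Sum.inr ((c : ZMod N)) ∈ T.arcs) : Triang (MB N) :=
  ⟨diagC N T c, Tp_valid N T c hN, Tp_nodup N T c hN, Tp_noncross N T c hN,
    Tp_maximal N T c hN hcT⟩

/- the map on triangles and the star bijection -/

lemma castN_add (s : ℤ) (p : ℕ) :
    ((s + (p : ℤ) : ℤ) : ZMod N) = ((s : ZMod N)) + ((p : ℕ) : ZMod N) := by
  push_cast; ring

def phiT : LTri → ZMod (MB N) × ℕ × ℕ
  | Sum.inl t => (psi N c t.1, t.2.1, t.2.2)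
  | Sum.inr t => (psi N c t.1, t.2, (Hi N c + 1 - (t.1 + t.2)).toNat)

lemma star_forward (hN : 3 ≤ N) (hc0 : 0 ≤ c) (hc1 : c < N)
    (hcT : Sum.inr ((c : ZMod N)) ∈ T.arcs)
    (v : ℤ) (hv1 : 1 ≤ v) (hv2 : v ≤ 2 * N)
    (l : LTri) (hl : IsPTri T (LProj l)) (hcor : LCorner l v) :
    IsUTri (Tp N T c hN hcT) (phiT N c l) ∧ UInc (psi N c v) (phiT N c l) := by
  have hL := Hi_sub_Lo N c
  have hLo : Lo N c = c - 3 * (N:ℤ) := rfl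
  have hHi : Hi N c = c + 4 * (N:ℤ) := rfl
  have hMBdef : MB N = 7 * N + 2 := rfl
  rcases l with ⟨a, p, q⟩ | ⟨k, m⟩ <;> simp only [phiT]
  · obtain ⟨hp, hq, hpq, hs1, hs2, hs3⟩ :
        1 ≤ p ∧ 1 ≤ q ∧ p + q ≤ N ∧ PSide T ((a : ZMod N)) p ∧
        PSide T (((a : ZMod N)) + (p : ZMod N)) q ∧ PSide T ((a : ZMod N)) (p + q) := hl
    have hcor' : v = a ∨ v = a + (p:ℤ) ∨ v = a + (p:ℤ) + (q:ℤ) := hcor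
    have hav : a ≤ v ∧ v ≤ a + (p:ℤ) + q := by rcases hcor' with rfl | rfl | rfl <;> omega
    have hb1 : Lo N c < a := by omega
    have hb2 : a + (p:ℤ) + q < Hi N c := by omega
    have hside1 : USide (Tp N T c hN hcT) (psi N c a) p := by
      rcases hs1 with h | h
      · exact Or.inl h
      · refine Or.inr (Or.inl ?_)
        rw [← psi_add]
        exact bot_mem N T c a p (by omega) (by omega) h
    have hside2 : USide (Tp N T c hN hcT) (psi N c a + ((p:ℕ) : ZMod (MB N))) q := by
      rw [← psi_add]
      rcases hs2 with h | h
      · exact Or.inl h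
      · refine Or.inr (Or.inl ?_)
        rw [← psi_add]
        refine bot_mem N T c (a + (p:ℤ)) q (by omega) (by omega) ?_
        rwa [castN_add]
    have hside3 : USide (Tp N T c hN hcT) (psi N c a + ((p + q : ℕ) : ZMod (MB N)))
        (MB N - p - q) := by
      rw [← psi_add]
      rcases hs3 with h | h
      · exact absurd h (by omega)
      · refine Or.inr (Or.inr ?_)
        have hstep : psi N c (a + ((p + q : ℕ) : ℤ)) + ((MB N - p - q : ℕ) : ZMod (MB N))
            = psi N c a := by
          rw [← psi_add, show a + ((p + q : ℕ) : ℤ) + ((MB N - p - q : ℕ) : ℤ)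
            = a + ((MB N : ℕ) : ℤ) by push_cast; omega, psi_period]
        rw [hstep]
        exact bot_mem N T c a (p + q) (by omega) (by push_cast; omega) h
    refine ⟨?_, ?_⟩
    · show 1 ≤ p ∧ 1 ≤ q ∧ p + q ≤ MB N - 1 ∧ _ ∧ _ ∧ _ ∧
        (psi N c a).val < (psi N c a + ((p : ℕ) : ZMod (MB N))).val ∧
        (psi N c a).val < (psi N c a + ((p + q : ℕ) : ZMod (MB N))).val
      refine ⟨hp, hq, by omega, hside1, hside2, hside3, ?_, ?_⟩
      · rw [← psi_add]
        have g1 := psi_val N c a (by omega) (by omega)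
        have g2 := psi_val N c (a + (p:ℤ)) (by omega) (by omega)
        omega
      · rw [← psi_add]
        have g1 := psi_val N c a (by omega) (by omega)
        have g2 := psi_val N c (a + ((p+q:ℕ):ℤ)) (by push_cast; omega) (by push_cast; omega)
        omega
    · show psi N c v = psi N c a ∨ psi N c v = psi N c a + ((p : ℕ) : ZMod (MB N)) ∨
        psi N c v = psi N c a + ((p + q : ℕ) : ZMod (MB N))
      rcases hcor' with rfl | rfl | rfl
      · exact Or.inl rfl
      · exact Or.inr (Or.inl (psi_add N c a p))
      · refine Or.inr (Or.inr ?_)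
        rw [show a + (p:ℤ) + (q:ℤ) = a + ((p + q : ℕ) : ℤ) by push_cast; ring, psi_add]
  · obtain ⟨hm1, hmN, hk1, hk2, hside⟩ :
        1 ≤ m ∧ m ≤ N ∧ Sum.inr ((k : ZMod N)) ∈ T.arcs ∧
        Sum.inr (((k : ZMod N)) + (m : ZMod N)) ∈ T.arcs ∧ PSide T ((k : ZMod N)) m := hl
    have hcor' : v = k ∨ v = k + (m:ℤ) := hcor
    have hav : k ≤ v ∧ v ≤ k + (m:ℤ) := by rcases hcor' with rfl | rfl <;> omega
    have hb1 : Lo N c < k := by omega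
    have hb2 : k + (m:ℤ) < Hi N c := by omega
    have heZ : (((Hi N c + 1 - (k + m)).toNat : ℕ) : ℤ) = Hi N c + 1 - (k + m) :=
      Int.toNat_of_nonneg (by omega)
    set e' : ℕ := (Hi N c + 1 - (k + m)).toNat with he'
    have hstep1 : psi N c (k + (m:ℤ)) + ((e' : ℕ) : ZMod (MB N)) = ztop N := by
      rw [← psi_add, show k + (m:ℤ) + (e' : ℤ) = Hi N c + 1 by omega, ← ztop_eq]
    have hcen2 : Sum.inr (((k + (m:ℤ) : ℤ) : ZMod N)) ∈ T.arcs := by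
      rwa [castN_add]
    refine ⟨?_, ?_⟩
    swap
    · show psi N c v = psi N c k ∨ psi N c v = psi N c k + ((m : ℕ) : ZMod (MB N)) ∨
        psi N c v = psi N c k + ((m + e' : ℕ) : ZMod (MB N))
      rcases hcor' with rfl | rfl
      · exact Or.inl rfl
      · exact Or.inr (Or.inl (psi_add N c k m))
    show 1 ≤ m ∧ 1 ≤ e' ∧ m + e' ≤ MB N - 1 ∧ _ ∧ _ ∧ _ ∧
        (psi N c k).val < (psi N c k + ((m : ℕ) : ZMod (MB N))).val ∧
        (psi N c k).val < (psi N c k + ((m + e' : ℕ) : ZMod (MB N))).val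
    refine ⟨hm1, by omega, by omega, ?_, ?_, ?_, ?_, ?_⟩
    · rcases hside with h | h
      · exact Or.inl h
      · refine Or.inr (Or.inl ?_)
        rw [← psi_add]
        exact bot_mem N T c k m (by omega) (by omega) h
    · refine Or.inr ?_
      rw [← psi_add, hstep1]
      exact Or.inl (cen_mem N T c (k + (m:ℤ)) (by omega) (by omega) hcen2)
    · refine Or.inr ?_
      have hstep2 : psi N c k + ((m + e' : ℕ) : ZMod (MB N)) = psi N c (Hi N c + 1) := by
        rw [← psi_add]; congr 1; omega
      have hstep3 : psi N c (Hi N c + 1) + ((MB N - m - e' : ℕ) : ZMod (MB N))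
          = psi N c k := by
        rw [← psi_add, show Hi N c + 1 + ((MB N - m - e' : ℕ) : ℤ)
          = k + ((MB N : ℕ) : ℤ) by have := MB_cast N; omega, psi_period]
      rw [hstep2, hstep3]
      refine Or.inr ?_
      rw [← ztop_eq]
      exact cen_mem N T c k (by omega) (by omega) hk1
    · rw [← psi_add]
      have g1 := psi_val N c k (by omega) (by omega)
      have g2 := psi_val N c (k + (m:ℤ)) (by omega) (by omega)
      omega
    · have hstep2 : psi N c k + ((m + e' : ℕ) : ZMod (MB N)) = psi N c (Hi N c + 1) := by
        rw [← psi_add]; congr 1; omega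
      rw [hstep2]
      have g1 := psi_val N c k (by omega) (by omega)
      have g2 := psi_val N c (Hi N c + 1) (by omega) (by omega)
      omega

lemma memD_classify (hN : 3 ≤ N) (hcT : Sum.inr ((c : ZMod N)) ∈ T.arcs)
    (s t : ℤ) (hs : Lo N c ≤ s) (hst : s < t) (ht : t ≤ Hi N c + 1)
    (h : MemD (Tp N T c hN hcT) (psi N c s) (psi N c t)) :
    (t ≤ Hi N c ∧ 2 ≤ t - s ∧ t - s ≤ N ∧
        Sum.inl (((s : ZMod N)), (t - s).toNat) ∈ T.arcs) ∨
      (t = Hi N c + 1 ∧ Lo N c < s ∧ s < Hi N c ∧ Sum.inr ((s : ZMod N)) ∈ T.arcs) := by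
  have hL := Hi_sub_Lo N c
  rcases h with h | h
  · obtain ⟨a, b, h1, h2, h3, hx, hy, hk⟩ := diag_repr N T c ((mem_diagC N T c).mp h)
    have e1 := psi_inj N c hs (by omega) (by omega) (by omega) hx
    have e2 := psi_inj N c (by omega) ht (by omega) (by omega) hy
    subst e1; subst e2
    exact hk
  · obtain ⟨a, b, h1, h2, h3, hx, hy, hk⟩ := diag_repr N T c ((mem_diagC N T c).mp h)
    have e1 := psi_inj N c (by omega) ht (by omega) (by omega) hx
    have e2 := psi_inj N c hs (by omega) (by omega) (by omega) hy
    omega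

lemma star_backward (hN : 3 ≤ N) (hc0 : 0 ≤ c) (hc1 : c < N)
    (hcT : Sum.inr ((c : ZMod N)) ∈ T.arcs)
    (v : ℤ) (hv1 : 1 ≤ v) (hv2 : v ≤ 2 * N)
    (u : ZMod (MB N) × ℕ × ℕ)
    (hu : IsUTri (Tp N T c hN hcT) u) (hinc : UInc (psi N c v) u) :
    ∃ l : LTri, IsPTri T (LProj l) ∧ LCorner l v ∧ phiT N c l = u := by
  obtain ⟨x, p', q'⟩ := u
  have hL := Hi_sub_Lo N c
  have hLo : Lo N c = c - 3 * (N:ℤ) := rfl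
  have hHi : Hi N c = c + 4 * (N:ℤ) := rfl
  have hMB := MB_cast N
  have hMBdef : MB N = 7 * N + 2 := rfl
  obtain ⟨hp, hq, hpq, hus1, hus2, hus3, hg1, hg2⟩ :
      1 ≤ p' ∧ 1 ≤ q' ∧ p' + q' ≤ MB N - 1 ∧ USide (Tp N T c hN hcT) x p' ∧
      USide (Tp N T c hN hcT) (x + ((p' : ℕ) : ZMod (MB N))) q' ∧
      USide (Tp N T c hN hcT) (x + ((p' + q' : ℕ) : ZMod (MB N))) (MB N - p' - q') ∧
      x.val < (x + ((p' : ℕ) : ZMod (MB N))).val ∧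
      x.val < (x + ((p' + q' : ℕ) : ZMod (MB N))).val := hu
  obtain ⟨s1, hs1a, hs1b, rfl⟩ := exists_rep N c x
  rw [← psi_add] at hus2 hg1
  rw [← psi_add] at hus3 hg2
  have hx3 : s1 + ((p' + q' : ℕ) : ℤ) = s1 + (p' : ℤ) + (q' : ℤ) := by push_cast; ring
  rw [hx3] at hus3 hg2
  have hval1 := psi_val N c s1 hs1a hs1b
  have hw2 : s1 + (p' : ℤ) ≤ Hi N c + 1 := by
    by_contra hcon; push_neg at hcon
    have hmod1 := psi_val_mod N c (s1 + (p' : ℤ))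
    have hsplit : (s1 + (p':ℤ) - Lo N c) % (7*(N:ℤ)+2)
        = s1 + p' - Lo N c - (7*(N:ℤ)+2) := by
      conv_lhs => rw [show s1 + (p':ℤ) - Lo N c
        = (s1 + p' - Lo N c - (7*(N:ℤ)+2)) + (7*(N:ℤ)+2)*1 by ring]
      rw [Int.add_mul_emod_self_left]
      exact Int.emod_eq_of_lt (by omega) (by omega)
    zify at hg1
    omega
  have hw3 : s1 + (p' : ℤ) + q' ≤ Hi N c + 1 := by
    by_contra hcon; push_neg at hcon
    have hmod1 := psi_val_mod N c (s1 + (p' : ℤ) + q')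
    have hsplit : (s1 + (p':ℤ) + q' - Lo N c) % (7*(N:ℤ)+2)
        = s1 + p' + q' - Lo N c - (7*(N:ℤ)+2) := by
      conv_lhs => rw [show s1 + (p':ℤ) + q' - Lo N c
        = (s1 + p' + q' - Lo N c - (7*(N:ℤ)+2)) + (7*(N:ℤ)+2)*1 by ring]
      rw [Int.add_mul_emod_self_left]
      exact Int.emod_eq_of_lt (by omega) (by omega)
    zify at hg2
    omega
  have hval2 := psi_val N c (s1 + (p':ℤ)) (by omega) hw2
  have hval3 := psi_val N c (s1 + (p':ℤ) + q') (by omega) hw3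
  have hvmem : v = s1 ∨ v = s1 + (p':ℤ) ∨ v = s1 + (p':ℤ) + (q':ℤ) := by
    have hinc' : psi N c v = psi N c s1 ∨
        psi N c v = psi N c s1 + ((p' : ℕ) : ZMod (MB N)) ∨
        psi N c v = psi N c s1 + ((p' + q' : ℕ) : ZMod (MB N)) := hinc
    rw [← psi_add, ← psi_add, hx3] at hinc'
    rcases hinc' with h | h | h
    · exact Or.inl (psi_inj N c (by omega) (by omega) hs1a hs1b h)
    · exact Or.inr (Or.inl (psi_inj N c (by omega) (by omega) (by omega) hw2 h))
    · exact Or.inr (Or.inr (psi_inj N c (by omega) (by omega) (by omega) hw3 h))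
  have hps1 : PSide T ((s1 : ZMod N)) p' := by
    rcases hus1 with h | h
    · exact Or.inl h
    · rw [← psi_add] at h
      have h' := memD_classify N T c hN hcT s1 (s1 + (p':ℤ)) hs1a (by omega) hw2 h
      rcases h' with ⟨g1, g2, g3, g4⟩ | ⟨g1, _⟩
      · refine Or.inr ?_
        have hh : (s1 + (p':ℤ) - s1).toNat = p' := by omega
        rwa [hh] at g4
      · omega
  by_cases h3H : s1 + (p':ℤ) + q' ≤ Hi N c
  · -- interior triangle
    have harc3 : Sum.inl (((s1 : ZMod N)), (s1 + (p':ℤ) + q' - s1).toNat) ∈ T.arcs ∧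
        s1 + (p':ℤ) + q' - s1 ≤ N := by
      have hne : MB N - p' - q' ≠ 1 := by omega
      rcases hus3 with h | h
      · exact absurd h hne
      · have hstep : psi N c (s1 + (p':ℤ) + q') + ((MB N - p' - q' : ℕ) : ZMod (MB N))
            = psi N c s1 := by
          rw [← psi_add, show s1 + (p':ℤ) + q' + ((MB N - p' - q' : ℕ) : ℤ)
            = s1 + ((MB N : ℕ) : ℤ) by omega, psi_period]
        rw [hstep] at h
        have h' := memD_classify N T c hN hcT s1 (s1 + (p':ℤ) + q') hs1a (by omega) hw3
          (Or.symm h)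
        rcases h' with ⟨g1, g2, g3, g4⟩ | ⟨g1, _⟩
        · exact ⟨g4, g3⟩
        · omega
    have hps2 : PSide T (((s1 + (p':ℤ) : ℤ) : ZMod N)) q' := by
      rcases hus2 with h | h
      · exact Or.inl h
      · rw [← psi_add] at h
        have h' := memD_classify N T c hN hcT (s1 + (p':ℤ)) (s1 + (p':ℤ) + q')
          (by omega) (by omega) hw3 h
        rcases h' with ⟨g1, g2, g3, g4⟩ | ⟨g1, _⟩
        · refine Or.inr ?_
          have hh : (s1 + (p':ℤ) + q' - (s1 + (p':ℤ))).toNat = q' := by omega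
          rwa [hh] at g4
        · omega
    refine ⟨Sum.inl (s1, p', q'), ?_, ?_, ?_⟩
    · show 1 ≤ p' ∧ 1 ≤ q' ∧ p' + q' ≤ N ∧ PSide T ((s1 : ZMod N)) p' ∧
        PSide T (((s1 : ZMod N)) + (p' : ZMod N)) q' ∧ PSide T ((s1 : ZMod N)) (p' + q')
      refine ⟨hp, hq, by omega, hps1, ?_, ?_⟩
      · rw [← castN_add]; exact hps2
      · refine Or.inr ?_
        have hh : (s1 + (p':ℤ) + q' - s1).toNat = p' + q' := by omega
        have := harc3.1
        rwa [hh] at this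
    · show v = s1 ∨ v = s1 + (p':ℤ) ∨ v = s1 + (p':ℤ) + (q':ℤ)
      exact hvmem
    · rfl
  · -- triangle incident with the apex
    have h3 : s1 + (p':ℤ) + q' = Hi N c + 1 := by omega
    have hvne3 : v ≠ s1 + (p':ℤ) + q' := by omega
    have hb : (p':ℤ) ≤ N ∧ Lo N c < s1 := by
      rcases hps1 with h | h
      · rcases hvmem with rfl | hv | hv
        · constructor <;> omega
        · constructor <;> omega
        · exact absurd hv hvne3
      · have hval' : 2 ≤ p' ∧ p' ≤ N := T.valid _ h
        rcases hvmem with rfl | hv | hv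
        · constructor <;> omega
        · constructor <;> omega
        · exact absurd hv hvne3
    have hcen1 : Sum.inr ((s1 : ZMod N)) ∈ T.arcs := by
      have hne : MB N - p' - q' ≠ 1 := by omega
      rcases hus3 with h | h
      · exact absurd h hne
      · have hstep : psi N c (s1 + (p':ℤ) + q') + ((MB N - p' - q' : ℕ) : ZMod (MB N))
            = psi N c s1 := by
          rw [← psi_add, show s1 + (p':ℤ) + q' + ((MB N - p' - q' : ℕ) : ℤ)
            = s1 + ((MB N : ℕ) : ℤ) by omega, psi_period]
        rw [hstep] at h
        have h' := memD_classify N T c hN hcT s1 (s1 + (p':ℤ) + q') hs1a (by omega) hw3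
          (Or.symm h)
        rcases h' with ⟨g1, _⟩ | ⟨_, _, _, g4⟩
        · omega
        · exact g4
    have hcen2 : Sum.inr (((s1 + (p':ℤ) : ℤ) : ZMod N)) ∈ T.arcs := by
      rcases hus2 with h | h
      · have hcast : ((s1 + (p':ℤ) : ℤ) : ZMod N) = ((c : ZMod N)) :=
          cast_eq_of_dvd N c hN _ ⟨4, by omega⟩
        rw [hcast]; exact hcT
      · rw [← psi_add] at h
        have h' := memD_classify N T c hN hcT (s1 + (p':ℤ)) (s1 + (p':ℤ) + q')
          (by omega) (by omega) hw3 h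
        rcases h' with ⟨g1, _⟩ | ⟨_, _, _, g4⟩
        · omega
        · exact g4
    refine ⟨Sum.inr (s1, p'), ?_, ?_, ?_⟩
    · show 1 ≤ p' ∧ p' ≤ N ∧ Sum.inr ((s1 : ZMod N)) ∈ T.arcs ∧
        Sum.inr (((s1 : ZMod N)) + (p' : ZMod N)) ∈ T.arcs ∧ PSide T ((s1 : ZMod N)) p'
      refine ⟨hp, by omega, hcen1, ?_, hps1⟩
      rw [← castN_add]; exact hcen2
    · show v = s1 ∨ v = s1 + (p':ℤ)
      rcases hvmem with h | h | h
      exacts [Or.inl h, Or.inr h, absurd h hvne3]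
    · show (psi N c s1, p', (Hi N c + 1 - (s1 + (p':ℤ))).toNat) = (psi N c s1, p', q')
      have hh : (Hi N c + 1 - (s1 + (p':ℤ))).toNat = q' := by omega
      rw [hh]

lemma phi_inj (hN : 3 ≤ N) (hc0 : 0 ≤ c) (hc1 : c < N)
    (v w : ℤ) (hv1 : 1 ≤ v) (hv2 : v ≤ 2 * N) (hw1 : 1 ≤ w) (hw2 : w ≤ 2 * N)
    (l l' : LTri) (hl : IsPTri T (LProj l)) (hl' : IsPTri T (LProj l'))
    (hcor : LCorner l v) (hcor' : LCorner l' w)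
    (h : phiT N c l = phiT N c l') : l = l' := by
  have hL := Hi_sub_Lo N c
  have hLo : Lo N c = c - 3 * (N:ℤ) := rfl
  have hHi : Hi N c = c + 4 * (N:ℤ) := rfl
  rcases l with ⟨a, p, q⟩ | ⟨k, m⟩ <;> rcases l' with ⟨a2, p2, q2⟩ | ⟨k2, m2⟩ <;>
    simp only [phiT, Prod.mk.injEq] at h <;> obtain ⟨h1, h2, h3⟩ := h
  · have hb : 1 ≤ p ∧ 1 ≤ q ∧ p + q ≤ N := ⟨hl.1, hl.2.1, hl.2.2.1⟩
    have hb' : 1 ≤ p2 ∧ 1 ≤ q2 ∧ p2 + q2 ≤ N := ⟨hl'.1, hl'.2.1, hl'.2.2.1⟩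
    have hco : v = a ∨ v = a + (p:ℤ) ∨ v = a + (p:ℤ) + (q:ℤ) := hcor
    have hco' : w = a2 ∨ w = a2 + (p2:ℤ) ∨ w = a2 + (p2:ℤ) + (q2:ℤ) := hcor'
    have hav : a ≤ v ∧ v ≤ a + (p:ℤ) + q := by rcases hco with rfl | rfl | rfl <;> omega
    have hav' : a2 ≤ w ∧ w ≤ a2 + (p2:ℤ) + q2 := by
      rcases hco' with rfl | rfl | rfl <;> omega
    have e := psi_inj N c (by omega) (by omega) (by omega) (by omega) h1
    subst e; subst h2; subst h3; rfl
  · exfalso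
    have hb : 1 ≤ p ∧ 1 ≤ q ∧ p + q ≤ N := ⟨hl.1, hl.2.1, hl.2.2.1⟩
    have hb' : 1 ≤ m2 ∧ m2 ≤ N := ⟨hl'.1, hl'.2.1⟩
    have hco : v = a ∨ v = a + (p:ℤ) ∨ v = a + (p:ℤ) + (q:ℤ) := hcor
    have hco' : w = k2 ∨ w = k2 + (m2:ℤ) := hcor'
    have hav : a ≤ v ∧ v ≤ a + (p:ℤ) + q := by rcases hco with rfl | rfl | rfl <;> omega
    have hav' : k2 ≤ w ∧ w ≤ k2 + (m2:ℤ) := by rcases hco' with rfl | rfl <;> omega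
    have e := psi_inj N c (by omega) (by omega) (by omega) (by omega) h1
    omega
  · exfalso
    have hb : 1 ≤ m ∧ m ≤ N := ⟨hl.1, hl.2.1⟩
    have hb' : 1 ≤ p2 ∧ 1 ≤ q2 ∧ p2 + q2 ≤ N := ⟨hl'.1, hl'.2.1, hl'.2.2.1⟩
    have hco : v = k ∨ v = k + (m:ℤ) := hcor
    have hco' : w = a2 ∨ w = a2 + (p2:ℤ) ∨ w = a2 + (p2:ℤ) + (q2:ℤ) := hcor'
    have hav : k ≤ v ∧ v ≤ k + (m:ℤ) := by rcases hco with rfl | rfl <;> omega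
    have hav' : a2 ≤ w ∧ w ≤ a2 + (p2:ℤ) + q2 := by
      rcases hco' with rfl | rfl | rfl <;> omega
    have e := psi_inj N c (by omega) (by omega) (by omega) (by omega) h1
    omega
  · have hb : 1 ≤ m ∧ m ≤ N := ⟨hl.1, hl.2.1⟩
    have hb' : 1 ≤ m2 ∧ m2 ≤ N := ⟨hl'.1, hl'.2.1⟩
    have hco : v = k ∨ v = k + (m:ℤ) := hcor
    have hco' : w = k2 ∨ w = k2 + (m2:ℤ) := hcor'
    have hav : k ≤ v ∧ v ≤ k + (m:ℤ) := by rcases hco with rfl | rfl <;> omega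
    have hav' : k2 ≤ w ∧ w ≤ k2 + (m2:ℤ) := by rcases hco' with rfl | rfl <;> omega
    have e := psi_inj N c (by omega) (by omega) (by omega) (by omega) h1
    subst e; subst h2; rfl

lemma span_bounds' {N : ℕ} (hN : 3 ≤ N) (i j : ZMod N) (hj : j ≠ i + 1) :
    2 ≤ spanD i j ∧ spanD i j ≤ N := by
  haveI : NeZero N := ⟨by omega⟩
  unfold spanD
  split_ifs with h
  · omega
  · have h1 : (j - i).val < N := ZMod.val_lt _
    have h2 : j - i ≠ 0 := sub_ne_zero.mpr h
    have h3 : 0 < (j - i).val := ZMod.val_pos.mpr h2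
    have h4 : (j - i).val ≠ 1 := by
      intro hval
      apply hj
      have hcast : (((j - i).val : ℕ) : ZMod N) = j - i := by
        rw [ZMod.natCast_val, ZMod.cast_id]
      rw [hval] at hcast
      push_cast at hcast
      linear_combination -hcast
    omega

end Construction


/-- The restriction of a triangulation `T` of a once-punctured
disc to the truncated unpunctured region `S_{ij}` cut off by the arc `D_{ij}`
(with `j ≠ i + 1`) extends to a triangulation `T'` of an unpunctured disc with a
possibly different set of marked points and the puncture removed: there is a map
`ψ` sending the boundary vertices of `S_{ij}` to consecutive marked points of the
new disc, carrying arcs of `T` inside `S_{ij}` to diagonals of `T'`, and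
matching numbers in `S_{ij}` agree with those in the new disc. -/
theorem restriction_extends_to_polygon_triangulation (N : ℕ) (hN : 3 ≤ N)
    (T : PTriang N) (i j : ZMod N) (hj : j ≠ i + 1) :
    ∃ (M : ℕ) (_ : 3 ≤ M) (T' : Triang M) (ψ : ℤ → Vx M),
      (∀ t : ℤ, (i.val : ℤ) ≤ t → t < (i.val : ℤ) + (spanD i j : ℤ) →
        ψ (t + 1) = ψ t + 1) ∧
      (∀ s t : ℤ, (i.val : ℤ) ≤ s → s < t → t ≤ (i.val : ℤ) + (spanD i j : ℤ) →
        ψ s ≠ ψ t) ∧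
      (∀ (u : ℤ) (e : ℕ), 2 ≤ e → (i.val : ℤ) ≤ u →
        u + (e : ℤ) ≤ (i.val : ℤ) + (spanD i j : ℤ) →
        (Sum.inl (((u : ZMod N)), e) : PArc N) ∈ T.arcs →
        MemD T' (ψ u) (ψ (u + e))) ∧
      (∀ I : Finset ℤ, I ⊆ interiorIcc i j →
        mArcOn T I = UMatch T' (I.image ψ)) := by
  haveI : NeZero N := ⟨by omega⟩
  obtain ⟨c, hc0, hc1, hcT⟩ := exists_central N T hN
  have hL := Hi_sub_Lo N c
  have hLo : Lo N c = c - 3 * (N:ℤ) := rfl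
  have hHi : Hi N c = c + 4 * (N:ℤ) := rfl
  have hMBdef : MB N = 7 * N + 2 := rfl
  have hival : (i.val : ℤ) < N := by exact_mod_cast ZMod.val_lt i
  have hival0 : (0:ℤ) ≤ (i.val : ℤ) := Int.natCast_nonneg _
  obtain ⟨hsp1, hsp2⟩ := span_bounds' hN i j hj
  have hsp1' : (2:ℤ) ≤ (spanD i j : ℤ) := by exact_mod_cast hsp1
  have hsp2' : (spanD i j : ℤ) ≤ N := by exact_mod_cast hsp2
  refine ⟨MB N, by omega, Tp N T c hN hcT, psi N c, ?_, ?_, ?_, ?_⟩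
  · intro t _ _
    exact psi_one N c t
  · intro s t h1 h2 h3 heq
    have := psi_inj N c (by omega) (by omega) (by omega) (by omega) heq
    omega
  · intro u e he hu1 hu2 harc
    exact Or.inl (bot_mem N T c u e (by omega) (by omega) harc)
  · intro I hI
    have hwin : ∀ v ∈ I, 1 ≤ v ∧ v ≤ 2 * (N:ℤ) := by
      intro v hv
      have h := hI hv
      rw [interiorIcc, Finset.mem_Icc] at h
      omega
    have hinj : ∀ v ∈ I, ∀ w ∈ I, psi N c v = psi N c w → v = w := by
      intro v hv w hw h
      obtain ⟨g1, g2⟩ := hwin v hv; obtain ⟨g3, g4⟩ := hwin w hw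
      exact psi_inj N c (by omega) (by omega) (by omega) (by omega) h
    let f0 : {v // v ∈ I} → {w // w ∈ I.image (psi N c)} :=
      fun v => ⟨psi N c v.1, Finset.mem_image_of_mem _ v.2⟩
    have hf0 : Function.Bijective f0 := by
      constructor
      · rintro ⟨v, hv⟩ ⟨w, hw⟩ h
        exact Subtype.ext (hinj v hv w hw (congrArg Subtype.val h))
      · rintro ⟨w, hw⟩
        obtain ⟨v, hv, hveq⟩ := Finset.mem_image.mp hw
        exact ⟨⟨v, hv⟩, Subtype.ext hveq⟩
    let e0 := Equiv.ofBijective f0 hf0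
    have he0val : ∀ x : {v // v ∈ I}, (e0 x).1 = psi N c x.1 := fun _ => rfl
    unfold mArcOn UMatch UMatchIn
    rw [← Nat.card_coe_set_eq, ← Nat.card_coe_set_eq]
    apply Nat.card_congr
    have hFor : ∀ f : {v // v ∈ I} → LTri,
        f ∈ {f : {v // v ∈ I} → LTri | Function.Injective f ∧
          ∀ v : {v // v ∈ I}, IsPTri T (LProj (f v)) ∧ LCorner (f v) v.1} →
        (fun w => phiT N c (f (e0.symm w))) ∈
          {g : {w // w ∈ I.image (psi N c)} → ZMod (MB N) × ℕ × ℕ |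
            Function.Injective g ∧ ∀ w, IsUTri (Tp N T c hN hcT) (g w) ∧
              g w ∈ Set.univ ∧ UInc w.1 (g w)} := by
      intro f hf
      obtain ⟨hfinj, hfprop⟩ := hf
      constructor
      · intro w w' h
        apply e0.symm.injective
        apply hfinj
        have hv := hwin _ (e0.symm w).2
        have hv' := hwin _ (e0.symm w').2
        exact phi_inj N T c hN hc0 hc1 _ _ hv.1 hv.2 hv'.1 hv'.2 _ _
          (hfprop _).1 (hfprop _).1 (hfprop _).2 (hfprop _).2 h
      · intro w
        have hv := hwin _ (e0.symm w).2
        have hsf := star_forward N T c hN hc0 hc1 hcT _ hv.1 hv.2 _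
          (hfprop (e0.symm w)).1 (hfprop (e0.symm w)).2
        refine ⟨hsf.1, trivial, ?_⟩
        have hw1 : w.1 = psi N c (e0.symm w).1 :=
          (congrArg Subtype.val (e0.apply_symm_apply w)).symm
        rw [hw1]
        exact hsf.2
    refine Equiv.ofBijective (fun F => ⟨fun w => phiT N c (F.1 (e0.symm w)), hFor F.1 F.2⟩)
      ⟨?_, ?_⟩
    · intro F G h
      apply Subtype.ext
      funext v
      have h1 := congrFun (congrArg Subtype.val h) (e0 v)
      simp only [e0.symm_apply_apply] at h1
      have hv := hwin _ v.2
      exact phi_inj N T c hN hc0 hc1 _ _ hv.1 hv.2 hv.1 hv.2 _ _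
        (F.2.2 v).1 (G.2.2 v).1 (F.2.2 v).2 (G.2.2 v).2 h1
    · rintro ⟨g, hg⟩
      obtain ⟨hginj, hgprop⟩ := hg
      have hex : ∀ v : {v // v ∈ I}, ∃ l : LTri, IsPTri T (LProj l) ∧ LCorner l v.1 ∧
          phiT N c l = g (e0 v) := by
        intro v
        have hv := hwin _ v.2
        have hG := hgprop (e0 v)
        refine star_backward N T c hN hc0 hc1 hcT v.1 hv.1 hv.2 (g (e0 v)) hG.1 ?_
        have hval : (e0 v).1 = psi N c v.1 := rfl
        rw [← hval]
        exact hG.2.2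
      choose fl hfl1 hfl2 hfl3 using hex
      have hflinj : Function.Injective fl := by
        intro v v' h
        have hgeq : g (e0 v) = g (e0 v') := by rw [← hfl3, ← hfl3, h]
        exact e0.injective (hginj hgeq)
      refine ⟨⟨fl, hflinj, fun v => ⟨hfl1 v, hfl2 v⟩⟩, ?_⟩
      apply Subtype.ext
      funext w
      show phiT N c (fl (e0.symm w)) = g w
      rw [hfl3 (e0.symm w), e0.apply_symm_apply]

end Frieze
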